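/- Let G be a finite group, n a positive integer, pa ∈ VPA_n(G), m a divisor of n, and χ an ordinary character of G (or Brauer character modulo a prime not dividing n). Define μ_m^−(pa, χ) = (1/n) Σ_{x^G} Σ_{d|n, m|d} pa_d(x) Tr_{Q(ζ_n^d)/Q}(χ(x)). Then 0 ≤ μ(1, pa, χ) ≤ m · μ_m^−(pa, χ). -/

import Mathlib

open scoped Classical
noncomputable section

/-- A fixed primitive `n`-th root of unity in `ℂ`. -/
def zetaC (n : ℕ) : ℂ := Complex.exp (2 * Real.pi * Complex.I / n)

/-- The cyclotomic field `ℚ(ζ_m)` as a subfield of `ℂ`. -/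
def cycF (m : ℕ) : IntermediateField ℚ ℂ := IntermediateField.adjoin ℚ {zetaC m}

/-- Trace from `ℚ(ζ_m)` down to `ℚ` of a complex number lying in `ℚ(ζ_m)`
(junk value `0` otherwise). -/
def trQ (m : ℕ) (z : ℂ) : ℚ :=
  if h : z ∈ cycF m then Algebra.trace ℚ (cycF m) ⟨z, h⟩ else 0

variable {G : Type} [Group G] [Fintype G]

/-- The sum of the values of `f` over a set of representatives of the conjugacy
classes of `G`. -/
def classSum {R : Type} [AddCommMonoid R] (f : G → R) : R :=
  ∑ c : ConjClasses G, f c.out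

/-- The Luthar–Passi "multiplicity" of `ξ` attached to a list `pa` of class functions
(indexed by naturals; only indices dividing `n` matter) and a character `χ`. -/
def muLP (n : ℕ) (pa : ℕ → G → ℤ) (χ : G → ℂ) (ξ : ℂ) : ℂ :=
  (n : ℂ)⁻¹ * ∑ c : ConjClasses G, ∑ d ∈ n.divisors,
    (pa d c.out : ℂ) * (trQ (n / d) (χ c.out * ξ ^ (-(d : ℤ))) : ℚ)

/-- `χ` is the character of a finite-dimensional complex representation of `G`. -/
def IsOrdChar (χ : G → ℂ) : Prop :=
  ∃ (m : ℕ) (ρ : Representation ℂ G (Fin m → ℂ)), ∀ g, χ g = LinearMap.trace ℂ _ (ρ g)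

/-- `χ` is a Brauer character of `G` modulo the prime `p`: on `p`-regular elements it
is the sum of fixed lifts (to complex roots of unity) of the eigenvalues of a
representation of `G` over the algebraic closure of `𝔽_p`. -/
def IsBrauerChar (p : ℕ) (hp : p.Prime) (χ : G → ℂ) : Prop :=
  haveI : Fact p.Prime := ⟨hp⟩
  ∃ (m : ℕ) (ρ : G →* Matrix.GeneralLinearGroup (Fin m) (AlgebraicClosure (ZMod p)))
    (φ : (AlgebraicClosure (ZMod p))ˣ →* ℂˣ),
    (∀ ζ : (AlgebraicClosure (ZMod p))ˣ, orderOf (φ ζ) = orderOf ζ) ∧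
    ∀ g : G, ¬ p ∣ orderOf g →
      χ g = (((ρ g : Matrix (Fin m) (Fin m) (AlgebraicClosure (ZMod p))).charpoly.roots).map
        (fun r => if h : r = 0 then 0 else (φ (Units.mk0 r h) : ℂ))).sum

/-- `pa` is a distribution of virtual partial augmentations of order `n` for `G`:
integer-valued class functions indexed by the divisors of `n` satisfying (V1)–(V4). -/
def IsVPA (n : ℕ) (pa : ℕ → G → ℤ) : Prop :=
  (∀ d, d ∣ n → ∀ g h : G, IsConj g h → pa d g = pa d h) ∧
  -- (V1)
  (∀ d, d ∣ n → classSum (pa d) = 1) ∧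
  -- (V2)
  (∀ d, d ∣ n → d ≠ n → pa d 1 = 0) ∧
  -- (V3)
  (∀ d, d ∣ n → ∀ g : G, ¬ orderOf g ∣ n / d → pa d g = 0) ∧
  -- (V4) for ordinary characters
  (∀ χ : G → ℂ, IsOrdChar χ → ∀ l : ℤ, ∃ k : ℕ, muLP n pa χ (zetaC n ^ l) = k) ∧
  -- (V4) for Brauer characters modulo primes not dividing `n`
  (∀ p (hp : p.Prime), ¬ p ∣ n → ∀ χ : G → ℂ, IsBrauerChar p hp χ →
    ∀ l : ℤ, ∃ k : ℕ, muLP n pa χ (zetaC n ^ l) = k)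

/-- `pa` is the distribution of partial augmentations of an actual element of `G`
of order `n`. -/
def IsTPA (n : ℕ) (pa : ℕ → G → ℤ) : Prop :=
  ∃ g₀ : G, orderOf g₀ = n ∧
    ∀ d, d ∣ n → ∀ h : G, pa d h = if IsConj (g₀ ^ d) h then 1 else 0

/-- Accumulated virtual partial augmentation at `m`: the sum of `f` over
representatives of the conjugacy classes of elements of order `m`. -/
def accPA (f : G → ℤ) (m : ℕ) : ℤ :=
  ∑ c : ConjClasses G, if orderOf c.out = m then f c.out else 0



lemma zetaC_ne_zero (n : ℕ) : zetaC n ≠ 0 := Complex.exp_ne_zero _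

lemma zetaC_prim (n : ℕ) (hn : n ≠ 0) : IsPrimitiveRoot (zetaC n) n := by
  simpa [zetaC] using Complex.isPrimitiveRoot_exp n hn

lemma zetaC_pow_div (n d : ℕ) (hd : d ∣ n) (hn : n ≠ 0) :
    zetaC n ^ (d : ℕ) = zetaC (n / d) := by
  obtain ⟨e, rfl⟩ := hd
  have hd0 : d ≠ 0 := by rintro rfl; simp at hn
  have he0 : e ≠ 0 := by rintro rfl; simp at hn
  rw [Nat.mul_div_cancel_left _ (Nat.pos_of_ne_zero hd0)]
  rw [zetaC, zetaC, ← Complex.exp_nat_mul]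
  congr 1
  have h1 : ((d : ℂ)) ≠ 0 := Nat.cast_ne_zero.mpr hd0
  have h2 : ((e : ℂ)) ≠ 0 := Nat.cast_ne_zero.mpr he0
  field_simp
  rw [Nat.cast_mul]

lemma zetaC_mem (m : ℕ) : zetaC m ∈ cycF m :=
  IntermediateField.subset_adjoin ℚ {zetaC m} rfl

lemma zetaC_zpow_mem (n d : ℕ) (hd : d ∣ n) (hn : n ≠ 0) (t : ℤ) :
    zetaC n ^ ((d : ℤ) * t) ∈ cycF (n / d) := by
  rw [zpow_mul, zpow_natCast, zetaC_pow_div n d hd hn]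
  exact zpow_mem (zetaC_mem (n / d)) t

lemma trQ_of_mem {k : ℕ} {z : ℂ} (h : z ∈ cycF k) :
    trQ k z = Algebra.trace ℚ (cycF k) ⟨z, h⟩ := dif_pos h

lemma trQ_of_not_mem {k : ℕ} {z : ℂ} (h : z ∉ cycF k) : trQ k z = 0 := dif_neg h

lemma trQ_zero (k : ℕ) : trQ k 0 = 0 := by
  rw [trQ_of_mem (zero_mem _)]
  have : (⟨(0:ℂ), zero_mem _⟩ : cycF k) = 0 := rfl
  rw [this, map_zero]

lemma trQ_mul_nat (k : ℕ) (z : ℂ) (q : ℕ) : trQ k (z * q) = q * trQ k z := by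
  by_cases hz : z ∈ cycF k
  · have hq : ((q : ℂ)) ∈ cycF k := by exact_mod_cast natCast_mem (cycF k) q
    rw [trQ_of_mem (mul_mem hz hq), trQ_of_mem hz]
    have : (⟨z * q, mul_mem hz hq⟩ : cycF k) = (q : ℚ) • (⟨z, hz⟩ : cycF k) := by
      ext
      rw [Rat.smul_def]
      push_cast; ring
    rw [this, map_smul, smul_eq_mul]
  · rcases Nat.eq_zero_or_pos q with h | h
    · subst h; simp [trQ_zero]
    · have : z * q ∉ cycF k := by
        intro hmem
        apply hz
        have hq : ((q : ℂ)) ∈ cycF k := by exact_mod_cast natCast_mem (cycF k) q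
        have := mul_mem hmem (inv_mem hq)
        have hq0 : ((q : ℂ)) ≠ 0 := Nat.cast_ne_zero.mpr h.ne'
        rwa [mul_assoc, mul_inv_cancel₀ hq0, mul_one] at this
      rw [trQ_of_not_mem this, trQ_of_not_mem hz, mul_zero]

lemma trQ_sum_mem (k : ℕ) {z : ℂ} (hz : z ∈ cycF k) {ω : ℂ} (hω : ω ∈ cycF k) (m : ℕ) :
    ∑ j ∈ Finset.range m, trQ k (z * ω ^ j) = trQ k (z * ∑ j ∈ Finset.range m, ω ^ j) := by
  have hmem : ∀ j, z * ω ^ j ∈ cycF k := fun j => mul_mem hz (pow_mem hω j)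
  have hS : z * ∑ j ∈ Finset.range m, ω ^ j ∈ cycF k :=
    mul_mem hz (sum_mem fun j _ => pow_mem hω j)
  rw [trQ_of_mem hS]
  have key : (⟨z * ∑ j ∈ Finset.range m, ω ^ j, hS⟩ : cycF k)
      = ∑ j ∈ Finset.range m, (⟨z * ω ^ j, hmem j⟩ : cycF k) := by
    ext
    push_cast
    rw [Finset.mul_sum]
  rw [key, map_sum]
  exact Finset.sum_congr rfl fun j _ => trQ_of_mem (hmem j)

lemma inner_key (n m d : ℕ) (hn : n ≠ 0) (hm : m ≠ 0) (hmn : m ∣ n) (hd : d ∣ n) (z : ℂ) :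
    ∑ j ∈ Finset.range m, trQ (n / d) (z * (zetaC n ^ ((j * (n / m) : ℕ) : ℤ)) ^ (-(d : ℤ))) =
      if m ∣ d then (m : ℚ) * trQ (n / d) z else 0 := by
  set q : ℕ := n / m with hq
  have hqm : m * q = n := Nat.mul_div_cancel' hmn
  have hq0 : q ≠ 0 := by rintro h; rw [h, mul_zero] at hqm; exact hn hqm.symm
  set ω : ℂ := zetaC n ^ ((d : ℤ) * (-(q : ℤ))) with hω
  have hωmem : ω ∈ cycF (n / d) := zetaC_zpow_mem n d hd hn _
  have hpow : ∀ j : ℕ,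
      (zetaC n ^ ((j * q : ℕ) : ℤ)) ^ (-(d : ℤ)) = ω ^ j := by
    intro j
    rw [hω, ← zpow_natCast (zetaC n ^ ((d:ℤ) * (-(q:ℤ)))) j, ← zpow_mul, ← zpow_mul]
    congr 1
    push_cast
    ring
  have hωm : ω ^ m = 1 := by
    rw [hω, ← zpow_natCast _ m, ← zpow_mul]
    have he : (d : ℤ) * (-(q : ℤ)) * m = (n : ℤ) * (-(d : ℤ)) := by
      have : (m : ℤ) * q = n := by exact_mod_cast hqm
      rw [← this]; ring
    rw [he, zpow_mul, zpow_natCast, (zetaC_prim n hn).pow_eq_one, one_zpow]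
  have hω1 : ω = 1 ↔ m ∣ d := by
    rw [hω, (zetaC_prim n hn).zpow_eq_one_iff_dvd]
    have h2 : ((n : ℤ) ∣ (d : ℤ) * (-(q : ℤ))) ↔ (n ∣ d * q) := by
      rw [mul_neg, dvd_neg]
      exact_mod_cast Iff.rfl
    rw [h2, ← hqm]
    rw [mul_comm m q, mul_comm d q]
    exact Nat.mul_dvd_mul_iff_left (Nat.pos_of_ne_zero hq0)
  have hgeom : ∑ j ∈ Finset.range m, ω ^ j = if m ∣ d then (m : ℂ) else 0 := by
    by_cases h : ω = 1
    · rw [if_pos (hω1.mp h)]; simp [h]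
    · rw [if_neg (fun hmd => h (hω1.mpr hmd)), geom_sum_eq h, hωm]
      simp
  have hL : ∀ j ∈ Finset.range m,
      trQ (n / d) (z * (zetaC n ^ ((j * q : ℕ) : ℤ)) ^ (-(d : ℤ))) = trQ (n / d) (z * ω ^ j) :=
    fun j _ => by rw [hpow j]
  rw [Finset.sum_congr rfl hL]
  by_cases hz : z ∈ cycF (n / d)
  · rw [trQ_sum_mem _ hz hωmem, hgeom]
    by_cases hmd : m ∣ d
    · rw [if_pos hmd, if_pos hmd, trQ_mul_nat]
    · rw [if_neg hmd, if_neg hmd, mul_zero, trQ_zero]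
  · have hω0 : ω ≠ 0 := zpow_ne_zero _ (zetaC_ne_zero n)
    have hnm : ∀ j : ℕ, z * ω ^ j ∉ cycF (n / d) := by
      intro j hmem
      apply hz
      have := mul_mem hmem (inv_mem (pow_mem hωmem j))
      rwa [mul_assoc, mul_inv_cancel₀ (pow_ne_zero j hω0), mul_one] at this
    rw [Finset.sum_congr rfl fun j _ => trQ_of_not_mem (hnm j)]
    rw [trQ_of_not_mem hz]
    simp

/-- `μ_m^-(pa, χ) = (1/n) Σ_{x^G} Σ_{d ∣ n, m ∣ d} pa_d(x) Tr_{ℚ(ζ_n^d)/ℚ}(χ(x))`. -/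
def muMinusLP (n m : ℕ) (pa : ℕ → G → ℤ) (χ : G → ℂ) : ℂ :=
  (n : ℂ)⁻¹ * ∑ c : ConjClasses G, ∑ d ∈ n.divisors.filter (fun d => m ∣ d),
    (pa d c.out : ℂ) * (trQ (n / d) (χ c.out) : ℚ)

lemma mu_sum_eq {G : Type} [Group G] [Fintype G] (n m : ℕ) (hn : n ≠ 0) (hm : m ≠ 0)
    (hmn : m ∣ n) (pa : ℕ → G → ℤ) (χ : G → ℂ) :
    ∑ j ∈ Finset.range m, muLP n pa χ (zetaC n ^ ((j * (n / m) : ℕ) : ℤ)) =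
      (m : ℂ) * muMinusLP n m pa χ := by
  unfold muLP muMinusLP
  rw [← Finset.mul_sum, mul_left_comm]
  congr 1
  rw [Finset.mul_sum, Finset.sum_comm]
  refine Finset.sum_congr rfl fun c _ => ?_
  rw [Finset.sum_comm, Finset.mul_sum, Finset.sum_filter]
  refine Finset.sum_congr rfl fun d hd => ?_
  have hd' : d ∣ n := (Nat.mem_divisors.mp hd).1
  rw [← Finset.mul_sum]
  have key : ∑ j ∈ Finset.range m,
      ((trQ (n / d) (χ c.out * (zetaC n ^ ((j * (n / m) : ℕ) : ℤ)) ^ (-(d : ℤ))) : ℚ) : ℂ)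
      = ((if m ∣ d then (m : ℚ) * trQ (n / d) (χ c.out) else 0 : ℚ) : ℂ) := by
    rw [← Rat.cast_sum, inner_key n m d hn hm hmn hd' (χ c.out)]
  rw [key]
  split_ifs with hmd
  · push_cast; ring
  · push_cast; ring

open ComplexOrder in
lemma natCast_nonneg_complex (k : ℕ) : (0 : ℂ) ≤ (k : ℂ) := by
  rw [show ((k : ℂ)) = ((k : ℝ) : ℂ) by push_cast; rfl]
  exact Complex.zero_le_real.mpr (Nat.cast_nonneg k)

open ComplexOrder in
/-- For `pa ∈ VPA_n(G)`, `m ∣ n` and `χ` an ordinary character, or a Brauer character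
modulo a prime not dividing `n`, one has `0 ≤ μ(1, pa, χ) ≤ m·μ_m^-(pa, χ)`. -/
theorem muLP_one_le {G : Type} [Group G] [Fintype G]
    (n m : ℕ) (hn : 0 < n) (hm : 0 < m) (hmn : m ∣ n)
    (pa : ℕ → G → ℤ) (hpa : IsVPA n pa) (χ : G → ℂ)
    (hχ : IsOrdChar χ ∨ ∃ p, ∃ hp : p.Prime, ¬ p ∣ n ∧ IsBrauerChar p hp χ) :
    0 ≤ muLP n pa χ 1 ∧ muLP n pa χ 1 ≤ (m : ℂ) * muMinusLP n m pa χ := by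
  have hn' : n ≠ 0 := hn.ne'
  have hm' : m ≠ 0 := hm.ne'
  have H : ∀ l : ℤ, ∃ k : ℕ, muLP n pa χ (zetaC n ^ l) = k := by
    rcases hχ with h | ⟨p, hp, hpn, hbr⟩
    · exact hpa.2.2.2.2.1 χ h
    · exact hpa.2.2.2.2.2 p hp hpn χ hbr
  have h1 : ∃ k : ℕ, muLP n pa χ 1 = k := by
    obtain ⟨k, hk⟩ := H 0
    exact ⟨k, by rw [← zpow_zero (zetaC n)]; exact hk⟩
  obtain ⟨k0, hk0⟩ := h1
  constructor
  · rw [hk0]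
    exact natCast_nonneg_complex k0
  · rw [← mu_sum_eq n m hn' hm' hmn pa χ]
    have h0m : (0 : ℕ) ∈ Finset.range m := Finset.mem_range.mpr hm
    have hf0 : muLP n pa χ (zetaC n ^ (((0 : ℕ) * (n / m) : ℕ) : ℤ)) = muLP n pa χ 1 := by
      norm_num
    rw [← hf0]
    refine Finset.single_le_sum (f := fun j => muLP n pa χ (zetaC n ^ ((j * (n / m) : ℕ) : ℤ))) (fun j _ => ?_) h0m
    obtain ⟨k, hk⟩ := H ((j * (n / m) : ℕ) : ℤ)
    rw [hk]
    exact natCast_nonneg_complex k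

end
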